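/- (The Weak Outbreak Condition.) Suppose S, E, I_1, …, I_N : ℝ → ℝ are differentiable, satisfy the SEIR system with N parallel infectious stages for all t ≥ t₀, that S(t) ≥ 0 and I_i(t) ≥ 0 for all t ≥ t₀ and all i, that for every t ≥ t₀ there exists an index i with I_i(t) > 0, and that S(t₀) < S*. Then the function U(t) = E(t) + S* Σ_{i=1}^N (β_i/γ_i) I_i(t) is strictly decreasing on [t₀, ∞); in particular U(t) < U(t₀) for every t > t₀. -/

import Mathlib

/-- The Weak Outbreak Condition: if `S(t₀) < S*` then the function
`U = E + S* Σᵢ (βᵢ/γᵢ) Iᵢ` is strictly decreasing on `[t₀, ∞)`; in particular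
`U(t) < U(t₀)` for every `t > t₀`. -/
theorem stmt_5
    (N : ℕ) [NeZero N]
    (σ : ℝ) (hσ : 0 < σ)
    (γ β x : Fin N → ℝ)
    (hγ : ∀ i, 0 < γ i) (hβ : ∀ i, 0 < β i) (hx : ∀ i, 0 < x i)
    (hxsum : ∑ i, x i = 1)
    (Sstar : ℝ) (hSstar : Sstar = (∑ i, x i * β i / γ i)⁻¹)
    (S E : ℝ → ℝ) (I : Fin N → ℝ → ℝ) (t₀ : ℝ)
    (hS : ∀ t ≥ t₀, HasDerivAt S (-(∑ i, β i * I i t) * S t) t)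
    (hE : ∀ t ≥ t₀, HasDerivAt E ((∑ i, β i * I i t) * S t - σ * E t) t)
    (hI : ∀ i, ∀ t ≥ t₀, HasDerivAt (I i) (x i * σ * E t - γ i * I i t) t)
    (hSnn : ∀ t ≥ t₀, 0 ≤ S t)
    (hInn : ∀ i, ∀ t ≥ t₀, 0 ≤ I i t)
    (hIpos : ∀ t ≥ t₀, ∃ i, 0 < I i t)
    (hS0 : S t₀ < Sstar) :
    StrictAntiOn (fun s => E s + Sstar * ∑ i, β i / γ i * I i s) (Set.Ici t₀) ∧
    ∀ t > t₀, E t + Sstar * ∑ i, β i / γ i * I i t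
      < E t₀ + Sstar * ∑ i, β i / γ i * I i t₀ := by
  have hNe : Nonempty (Fin N) := ⟨⟨0, Nat.pos_of_ne_zero (NeZero.ne N)⟩⟩
  have hsumpos : 0 < ∑ i, x i * β i / γ i :=
    Finset.sum_pos (fun i _ => by
      have := hx i; have := hβ i; have := hγ i; positivity) Finset.univ_nonempty
  have hSstarmul : Sstar * ∑ i, x i * β i / γ i = 1 := by
    rw [hSstar]; field_simp
  -- S is antitone on [t₀, ∞)
  have hScont : ContinuousOn S (Set.Ici t₀) := fun t ht =>
    ((hS t ht).continuousAt).continuousWithinAt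
  have hSanti : AntitoneOn S (Set.Ici t₀) := by
    apply antitoneOn_of_deriv_nonpos (convex_Ici t₀) hScont
      (fun t ht => by
        rw [interior_Ici] at ht
        exact (hS t ht.le).differentiableAt.differentiableWithinAt)
    intro t ht
    rw [interior_Ici] at ht
    rw [(hS t ht.le).deriv]
    have h1 : 0 ≤ ∑ i, β i * I i t :=
      Finset.sum_nonneg fun i _ => mul_nonneg (hβ i).le (hInn i t ht.le)
    have h2 := hSnn t ht.le
    nlinarith
  have hSlt : ∀ t ≥ t₀, S t < Sstar := fun t ht =>
    lt_of_le_of_lt (hSanti Set.self_mem_Ici ht ht) hS0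
  -- derivative of U
  have hU' : ∀ t ≥ t₀, HasDerivAt (fun s => E s + Sstar * ∑ i, β i / γ i * I i s)
      ((∑ i, β i * I i t) * (S t - Sstar)) t := by
    intro t ht
    have hsum : HasDerivAt (fun s => ∑ i, β i / γ i * I i s)
        (∑ i, β i / γ i * (x i * σ * E t - γ i * I i t)) t :=
      HasDerivAt.fun_sum fun i _ => (hI i t ht).const_mul _
    have h := (hE t ht).fun_add (hsum.const_mul Sstar)
    refine h.congr_deriv (Eq.symm ?_)
    have expand : ∑ i, β i / γ i * (x i * σ * E t - γ i * I i t)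
        = (σ * E t) * (∑ i, x i * β i / γ i) - ∑ i, β i * I i t := by
      rw [Finset.mul_sum, ← Finset.sum_sub_distrib]
      refine Finset.sum_congr rfl fun i _ => ?_
      have hgi := (hγ i).ne'
      field_simp
    rw [expand]
    linear_combination (-(σ * E t)) * hSstarmul
  have hIsumpos : ∀ t ≥ t₀, 0 < ∑ i, β i * I i t := by
    intro t ht
    obtain ⟨i, hi⟩ := hIpos t ht
    exact Finset.sum_pos' (fun j _ => mul_nonneg (hβ j).le (hInn j t ht))
      ⟨i, Finset.mem_univ i, mul_pos (hβ i) hi⟩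
  have hanti : StrictAntiOn (fun s => E s + Sstar * ∑ i, β i / γ i * I i s)
      (Set.Ici t₀) := by
    apply StrictAntiOn.mono ?_ (le_refl _)
    apply strictAntiOn_of_deriv_neg (convex_Ici t₀)
    · exact fun t ht => ((hU' t ht).continuousAt).continuousWithinAt
    · intro t ht
      rw [interior_Ici] at ht
      rw [(hU' t ht.le).deriv]
      exact mul_neg_of_pos_of_neg (hIsumpos t ht.le) (sub_neg.mpr (hSlt t ht.le))
  exact ⟨hanti, fun t ht => hanti Set.self_mem_Ici (le_of_lt ht) ht⟩
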